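/- Let Q be a face of P_a not contained in any coordinate hyperplane, and choose L_Q with L_Q = 1 on Q and L_Q > 1 on P_a \ Q. Then L_Q(e) > 0, and every element of R_Q is at most -L_Q(e); in particular every element of R_Q is a negative rational number. -/

import Mathlib

open Set

namespace BS

def toR {n : ℕ} (u : Fin n → ℤ) : Fin n → ℝ := fun i => (u i : ℝ)

def natR {n : ℕ} (u : Fin n → ℕ) : Fin n → ℝ := fun i => (u i : ℝ)

def natZ {n : ℕ} (u : Fin n → ℕ) : Fin n → ℤ := fun i => (u i : ℤ)

/-- `Γ` is the exponent set of a nonzero monomial ideal. -/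
def IsMonIdeal {n : ℕ} (Γ : Set (Fin n → ℕ)) : Prop :=
  Γ.Nonempty ∧ ∀ u ∈ Γ, ∀ w : Fin n → ℕ, u + w ∈ Γ

/-- The Newton polyhedron: convex hull of the exponent set. -/
def newton {n : ℕ} (Γ : Set (Fin n → ℕ)) : Set (Fin n → ℝ) :=
  convexHull ℝ (natR '' Γ)

/-- The subsemigroup (containing 0) of ℤⁿ generated by differences u - v,
u ∈ Γ, v ∈ Γ ∩ Q. -/
def diffMonoid {n : ℕ} (Γ : Set (Fin n → ℕ)) (Q : Set (Fin n → ℝ)) :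
    AddSubmonoid (Fin n → ℤ) :=
  AddSubmonoid.closure {d | ∃ u ∈ Γ, ∃ v ∈ Γ, natR v ∈ Q ∧ d = natZ u - natZ v}

/-- M_Q : the translate by e = (1,...,1) of the difference semigroup. -/
def MQ {n : ℕ} (Γ : Set (Fin n → ℕ)) (Q : Set (Fin n → ℝ)) : Set (Fin n → ℤ) :=
  {m | m - 1 ∈ diffMonoid Γ Q}

/-- M_Q^{(k)} = k·v₀ + M_Q. -/
def MQk {n : ℕ} (Γ : Set (Fin n → ℕ)) (Q : Set (Fin n → ℝ)) (v0 : Fin n → ℕ) (k : ℕ) :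
    Set (Fin n → ℤ) :=
  {m | m - (k : ℤ) • natZ v0 ∈ MQ Γ Q}

/-- V_Q : linear span of the face Q. -/
def VQ {n : ℕ} (Q : Set (Fin n → ℝ)) : Submodule ℝ (Fin n → ℝ) := Submodule.span ℝ Q

/-- R_Q = { -L_Q(u) : u ∈ (M_Q \ M_Q') ∩ V_Q }. -/
def RQ {n : ℕ} (Γ : Set (Fin n → ℕ)) (Q : Set (Fin n → ℝ)) (v0 : Fin n → ℕ)
    (L : (Fin n → ℝ) →ₗ[ℝ] ℝ) : Set ℝ :=
  {x | ∃ u ∈ MQ Γ Q \ MQk Γ Q v0 1, toR u ∈ VQ Q ∧ x = - L (toR u)}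

/-- Q is contained in some coordinate hyperplane. -/
def InCoordHyp {n : ℕ} (Q : Set (Fin n → ℝ)) : Prop := ∃ i, ∀ q ∈ Q, q i = 0

/-- The subgroup G_Q of ℤⁿ generated by differences of elements of Γ ∩ Q. -/
def diffGroup {n : ℕ} (Γ : Set (Fin n → ℕ)) (Q : Set (Fin n → ℝ)) :
    AddSubgroup (Fin n → ℤ) :=
  AddSubgroup.closure
    {d | ∃ u ∈ Γ, natR u ∈ Q ∧ ∃ v ∈ Γ, natR v ∈ Q ∧ d = natZ u - natZ v}

end BS

/-- With L_Q = 1 on Q and L_Q > 1 on P_a \\ Q: L_Q(e) > 0 and every element of R_Q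
is at most -L_Q(e); in particular every element of R_Q is a negative rational. -/
theorem RQ_negative {n : ℕ} (Γ : Set (Fin n → ℕ)) (hΓ : BS.IsMonIdeal Γ)
    (hproper : (0 : Fin n → ℕ) ∉ Γ)
    (Q : Set (Fin n → ℝ)) (hface : IsExposed ℝ (BS.newton Γ) Q)
    (hnc : ¬ BS.InCoordHyp Q)
    (v0 : Fin n → ℕ) (hv0 : v0 ∈ Γ) (hv0Q : BS.natR v0 ∈ Q)
    (L : (Fin n → ℝ) →ₗ[ℝ] ℝ) (hL1 : ∀ q ∈ Q, L q = 1)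
    (hLgt : ∀ x ∈ BS.newton Γ \ Q, 1 < L x)
    (hLrat : ∀ u : Fin n → ℤ, ∃ q : ℚ, L (BS.toR u) = (q : ℝ)) :
    0 < L (BS.toR (1 : Fin n → ℤ)) ∧
    ∀ x ∈ BS.RQ Γ Q v0 L,
      x ≤ - L (BS.toR (1 : Fin n → ℤ)) ∧ x < 0 ∧ ∃ q : ℚ, x = (q : ℝ) := by

  -- basic facts about toR / natR / natZ
  have htoR_add : ∀ a b : Fin n → ℤ, BS.toR (a + b) = BS.toR a + BS.toR b := by
    intro a b; funext i; simp [BS.toR]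
  have htoR_zero : BS.toR (0 : Fin n → ℤ) = 0 := by
    funext i; simp [BS.toR]
  have htoR_natZ : ∀ u : Fin n → ℕ, BS.toR (BS.natZ u) = BS.natR u := by
    intro u; funext i; simp [BS.toR, BS.natZ, BS.natR]
  -- every point of Γ has L ≥ 1
  have hPa : ∀ a ∈ Γ, 1 ≤ L (BS.natR a) := by
    intro a ha
    have hmem : BS.natR a ∈ BS.newton Γ :=
      subset_convexHull ℝ _ ⟨a, ha, rfl⟩
    by_cases hQ : BS.natR a ∈ Q
    · exact le_of_eq (hL1 _ hQ).symm
    · exact le_of_lt (hLgt _ ⟨hmem, hQ⟩)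
  -- L(e) > 0
  obtain ⟨u0, hu0⟩ := hΓ.1
  set m : ℕ := (Finset.univ.sup u0) + 1 with hm
  have hmu : ∀ i, u0 i ≤ m := fun i =>
    le_trans (Finset.le_sup (Finset.mem_univ i)) (Nat.le_succ _)
  have hconst : u0 + (fun i => m - u0 i) = fun _ => m := by
    funext i; simp [Nat.add_sub_cancel' (hmu i)]
  have hmΓ : (fun _ => m : Fin n → ℕ) ∈ Γ := by
    rw [← hconst]; exact hΓ.2 u0 hu0 _
  have hmR : BS.natR (fun _ => m : Fin n → ℕ) = (m : ℝ) • BS.toR (1 : Fin n → ℤ) := by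
    funext i; simp [BS.natR, BS.toR]
  have h1m : (1 : ℝ) ≤ (m : ℝ) * L (BS.toR (1 : Fin n → ℤ)) := by
    have := hPa _ hmΓ
    rwa [hmR, map_smul, smul_eq_mul] at this
  have hmpos : (0 : ℝ) < m := by positivity
  have hLe : 0 < L (BS.toR (1 : Fin n → ℤ)) := by
    by_contra h
    push_neg at h
    have : (m : ℝ) * L (BS.toR (1 : Fin n → ℤ)) ≤ 0 :=
      mul_nonpos_of_nonneg_of_nonpos (le_of_lt hmpos) h
    linarith
  refine ⟨hLe, ?_⟩
  -- L is nonnegative on the difference monoid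
  have hd : ∀ d ∈ BS.diffMonoid Γ Q, 0 ≤ L (BS.toR d) := by
    intro d hdm
    induction hdm using AddSubmonoid.closure_induction with
    | mem d hdgen =>
      obtain ⟨u, hu, v, hv, hvQ, rfl⟩ := hdgen
      have : BS.toR (BS.natZ u - BS.natZ v) = BS.natR u - BS.natR v := by
        funext i; simp [BS.toR, BS.natZ, BS.natR]
      rw [this, map_sub, hL1 _ hvQ]
      linarith [hPa u hu]
    | zero => rw [htoR_zero, map_zero]
    | add a b _ _ ha hb => rw [htoR_add, map_add]; linarith
  -- conclusion for elements of R_Q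
  intro x hx
  obtain ⟨u, ⟨huM, _⟩, _, rfl⟩ := hx
  have hud : u - 1 ∈ BS.diffMonoid Γ Q := huM
  have hsplit : BS.toR u = BS.toR (u - 1) + BS.toR (1 : Fin n → ℤ) := by
    rw [← htoR_add]; congr 1; ring
  have hge : L (BS.toR (1 : Fin n → ℤ)) ≤ L (BS.toR u) := by
    rw [hsplit, map_add]
    linarith [hd _ hud]
  refine ⟨by linarith, by linarith, ?_⟩
  obtain ⟨q, hq⟩ := hLrat u
  exact ⟨-q, by rw [hq]; push_cast; ring⟩
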